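/- A prime word has no proper border: if u is primitive and lexicographically minimal (or maximal) among all its cyclic rotations, then no nonempty word w with w ≠ u is both a prefix and a suffix of u. -/

import Mathlib

def listPow {A : Type*} (r : List A) (k : ℕ) : List A :=
  (List.replicate k r).flatten

lemma listPow_succ {A : Type*} (r : List A) (k : ℕ) :
    listPow r (k + 1) = r ++ listPow r k := by
  simp [listPow, List.replicate_succ]

lemma listPow_append {A : Type*} (r : List A) (m k : ℕ) :
    listPow r m ++ listPow r k = listPow r (m + k) := by
  simp [listPow, ← List.flatten_append, ← List.replicate_add]

lemma listPow_length {A : Type*} (r : List A) (k : ℕ) :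
    (listPow r k).length = k * r.length := by
  induction k with
  | zero => simp [listPow]
  | succ n ih =>
    rw [listPow_succ, List.length_append, ih, Nat.succ_mul]; omega

lemma comm_pow {A : Type*} : ∀ n (w x : List A), w.length + x.length ≤ n →
    w ≠ [] → x ≠ [] → w ++ x = x ++ w →
    ∃ t m k, 1 ≤ m ∧ 1 ≤ k ∧ w = listPow t m ∧ x = listPow t k := by
  intro n
  induction n with
  | zero =>
    intro w x hn hw _ _
    simp [List.length_eq_zero_iff] at hn
    exact (hw hn.1).elim
  | succ n ih =>
    intro w x hn hw hx hcomm
    rcases Nat.lt_trichotomy w.length x.length with hlt | heq | hlt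
    · -- w.length < x.length : w prefix of x
      have htake : w = x.take w.length := by
        have h := congrArg (List.take w.length) hcomm.symm
        rwa [List.take_append_of_le_length hlt.le,
          List.take_left' rfl, eq_comm] at h
      set z := x.drop w.length with hz
      have hxz : x = w ++ z := by
        conv_lhs => rw [← List.take_append_drop w.length x]
        rw [← htake, hz]
      have hzne : z ≠ [] := by
        intro h
        rw [hxz, h, List.append_nil] at hlt
        exact lt_irrefl _ hlt
      have hcomm' : w ++ z = z ++ w := by
        have h1 : w ++ (w ++ z) = (w ++ z) ++ w := by rw [← hxz]; exact hcomm
        rw [List.append_assoc] at h1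
        exact List.append_cancel_left h1
      have hlen' : w.length + z.length ≤ n := by
        have hw1 : 1 ≤ w.length := List.length_pos_iff.mpr hw
        have h2 := congrArg List.length hxz
        simp at h2
        omega
      obtain ⟨t, m, k, hm, hk, hwp, hzp⟩ := ih w z hlen' hw hzne hcomm'
      exact ⟨t, m, m + k, hm, by omega, hwp,
        by rw [hxz, hwp, hzp, listPow_append]⟩
    · -- equal lengths: w = x
      have h := (List.append_inj hcomm heq).1
      exact ⟨w, 1, 1, le_refl 1, le_refl 1, by simp [listPow], by simp [listPow, ← h]⟩
    · -- x.length < w.length : x prefix of w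
      have htake : x = w.take x.length := by
        have h := congrArg (List.take x.length) hcomm
        rwa [List.take_append_of_le_length hlt.le,
          List.take_left' rfl, eq_comm] at h
      set z := w.drop x.length with hz
      have hwz : w = x ++ z := by
        conv_lhs => rw [← List.take_append_drop x.length w]
        rw [← htake, hz]
      have hzne : z ≠ [] := by
        intro h
        rw [hwz, h, List.append_nil] at hlt
        exact lt_irrefl _ hlt
      have hcomm' : x ++ z = z ++ x := by
        have h1 : x ++ (x ++ z) = (x ++ z) ++ x := by rw [← hwz]; exact hcomm.symm
        rw [List.append_assoc] at h1
        exact List.append_cancel_left h1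
      have hlen' : x.length + z.length ≤ n := by
        have hx1 : 1 ≤ x.length := List.length_pos_iff.mpr hx
        have h2 := congrArg List.length hwz
        simp at h2
        omega
      obtain ⟨t, m, k, hm, hk, hxp, hzp⟩ := ih x z hlen' hx hzne hcomm'
      exact ⟨t, m + k, m, by omega, hm,
        by rw [hwz, hxp, hzp, listPow_append], hxp⟩

lemma lex_append_right' {A : Type*} {r : A → A → Prop} :
    ∀ {s t : List A}, List.Lex r s t → s.length = t.length →
    ∀ (w : List A), List.Lex r (s ++ w) (t ++ w)
  | _, _, List.Lex.nil, hlen, w => by simp at hlen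
  | _, _, List.Lex.cons h, hlen, w =>
      List.Lex.cons (lex_append_right' h (by simpa using hlen) w)
  | _, _, List.Lex.rel h, _, w => List.Lex.rel h

lemma le_cancel_left {A : Type*} [LinearOrder A] {w x y : List A}
    (h : w ++ x ≤ w ++ y) : x ≤ y := by
  by_contra hxy
  have hlt : y < x := lt_of_not_ge hxy
  have : (w ++ y) < (w ++ x) := List.Lex.append_left _ hlt _
  exact absurd h (not_le_of_gt this)

lemma le_cancel_right {A : Type*} [LinearOrder A] {w x y : List A}
    (hlen : x.length = y.length) (h : x ++ w ≤ y ++ w) : x ≤ y := by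
  by_contra hxy
  have hlt : y < x := lt_of_not_ge hxy
  have : (y ++ w) < (x ++ w) := lex_append_right' hlt hlen.symm w
  exact absurd h (not_le_of_gt this)

/-- A word is primitive if it is not a proper power of a shorter word. -/
def Primitive {A : Type*} (u : List A) : Prop :=
  u ≠ [] ∧ ∀ (r : List A) (k : ℕ), u = listPow r k → u = r

/-- A prime word: primitive and lexicographically minimal or maximal in the
class of its cyclic rotations. -/
def PrimeWord {A : Type*} [LinearOrder A] (u : List A) : Prop :=
  Primitive u ∧ ((∀ v, u ~r v → u ≤ v) ∨ (∀ v, u ~r v → v ≤ u))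

/-- A prime word has no proper border: no nonempty word `w ≠ u` is both a
prefix and a suffix of `u`. -/
theorem prime_word_no_border {A : Type*} [LinearOrder A] (u w : List A)
    (hu : PrimeWord u) (hw : w ≠ []) (hwu : w ≠ u)
    (hpre : w <+: u) (hsuf : w <:+ u) : False := by
  obtain ⟨x, hx⟩ := hpre
  obtain ⟨y, hy⟩ := hsuf
  have hxne : x ≠ [] := by rintro rfl; simp at hx; exact hwu hx
  have hyne : y ≠ [] := by rintro rfl; simp at hy; exact hwu hy
  have hlenxy : x.length = y.length := by
    have := congrArg List.length (hx.trans hy.symm)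
    simp at this; omega
  have hxy : x = y := by
    rcases hu.2 with hmin | hmax
    · have h1 : u ≤ x ++ w := hmin _ (hx ▸ List.isRotated_append)
      have h2 : u ≤ w ++ y := hmin _ (by rw [← hy]; exact List.isRotated_append)
      have hle1 : x ≤ y := le_cancel_left (hx ▸ h2)
      have hle2 : y ≤ x := le_cancel_right hlenxy.symm (hy ▸ h1)
      exact le_antisymm hle1 hle2
    · have h1 : x ++ w ≤ u := hmax _ (hx ▸ List.isRotated_append)
      have h2 : w ++ y ≤ u := hmax _ (by rw [← hy]; exact List.isRotated_append)
      have hle1 : y ≤ x := le_cancel_left (hx ▸ h2)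
      have hle2 : x ≤ y := le_cancel_right hlenxy (hy ▸ h1)
      exact le_antisymm hle2 hle1
  subst hxy
  have hcomm : w ++ x = x ++ w := hx.trans hy.symm
  obtain ⟨t, m, k, hm, hk, hwp, hxp⟩ :=
    comm_pow (w.length + x.length) w x le_rfl hw hxne hcomm
  have hu' : u = listPow t (m + k) := by rw [← hx, hwp, hxp, listPow_append]
  have hut : u = t := hu.1.2 t (m + k) hu'
  have htne : t.length ≠ 0 := by
    intro h
    apply hw
    rw [hwp]
    have : t = [] := List.length_eq_zero_iff.mp h
    simp [this, listPow]
  have hlen : u.length = (m + k) * t.length := by rw [hu', listPow_length]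
  rw [hut] at hlen
  have h2 : 2 ≤ m + k := by omega
  have := Nat.mul_le_mul_right t.length h2
  omega
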